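/- Let (Ω, 𝓔, μ) be a complete σ-finite measure space and X a Polish space with its Borel σ-algebra. If E ⊆ Ω × X is measurable with respect to the product σ-algebra 𝓔 ⊗ Borel(X), then the projection {ω ∈ Ω | ∃ x ∈ X, (ω, x) ∈ E} of E onto Ω belongs to 𝓔. -/

import Mathlib

open MeasureTheory Set Filter Function Topology

/-! Auxiliary: dependent choice along prefixes of a sequence. -/

open scoped Classical in
noncomputable def projSeqAux (P : (ℕ → ℕ) → ℕ → Prop) : ℕ → (ℕ → ℕ)
  | 0 => fun _ => 0
  | k + 1 =>
    let a := projSeqAux P k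
    if h : ∃ m, P (Function.update a k m) (k + 1) then
      Function.update a k (Classical.choose h)
    else a

lemma projSeq_exists (P : (ℕ → ℕ) → ℕ → Prop)
    (hdep : ∀ k (a b : ℕ → ℕ), (∀ i, i < k → a i = b i) → P a k → P b k)
    (h0 : P (fun _ => 0) 0)
    (hstep : ∀ k a, P a k → ∃ m, P (Function.update a k m) (k + 1)) :
    ∃ n : ℕ → ℕ, ∀ k, P n k := by
  have hF : ∀ k, P (projSeqAux P k) k := by
    intro k
    induction k with
    | zero => exact h0
    | succ k ih =>
      have h : ∃ m, P (Function.update (projSeqAux P k) k m) (k + 1) :=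
        hstep k _ ih
      simp only [projSeqAux, dif_pos h]
      exact Classical.choose_spec h
  set n : ℕ → ℕ := fun i => projSeqAux P (i + 1) i with hn
  have hagree : ∀ k i, i < k → projSeqAux P k i = n i := by
    intro k
    induction k with
    | zero => intro i hi; omega
    | succ k ih =>
      intro i hi
      rcases Nat.lt_succ_iff_lt_or_eq.1 hi with hi' | rfl
      · have : projSeqAux P (k + 1) i = projSeqAux P k i := by
          by_cases h : ∃ m, P (Function.update (projSeqAux P k) k m) (k + 1)
          · simp only [projSeqAux, dif_pos h]
            exact Function.update_of_ne (by omega) _ _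
          · simp only [projSeqAux, dif_neg h]
        rw [this]; exact ih i hi'
      · rfl
  exact ⟨n, fun k => hdep k _ _ (fun i hi => hagree k i hi) (hF k)⟩

/-- Inner approximation of an analytic set (a continuous image of Baire space) by
measurable subsets, for a finite measure.  This is the measure-theoretic
capacitability argument. -/
lemma analytic_inner_approx {Y : Type*} [TopologicalSpace Y] [T2Space Y]
    [MeasurableSpace Y] [OpensMeasurableSpace Y]
    (ν : Measure Y) [IsFiniteMeasure ν] {g : (ℕ → ℕ) → Y} (hg : Continuous g)
    {c : ENNReal} (hc : c < ν (Set.range g)) :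
    ∃ M : Set Y, MeasurableSet M ∧ M ⊆ Set.range g ∧ c ≤ ν M := by
  classical
  set T : (ℕ → ℕ) → ℕ → Set (ℕ → ℕ) := fun n k => {x | ∀ i, i < k → x i ≤ n i} with hT
  set P : (ℕ → ℕ) → ℕ → Prop := fun n k => c < ν (g '' T n k) with hP
  obtain ⟨n, hn⟩ : ∃ n : ℕ → ℕ, ∀ k, P n k := by
    apply projSeq_exists P
    · intro k a b hab h
      have : T a k = T b k := by
        ext x; constructor <;> intro hx i hi
        · rw [← hab i hi]; exact hx i hi
        · rw [hab i hi]; exact hx i hi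
      simpa only [hP, ← this] using h
    · have : T (fun _ => 0) 0 = Set.univ := by
        ext x; simp [hT]
      simpa only [hP, this, Set.image_univ] using hc
    · intro k a h
      have hU : (⋃ m, T (Function.update a k m) (k + 1)) = T a k := by
        ext x
        simp only [Set.mem_iUnion]
        constructor
        · rintro ⟨m, hx⟩ i hi
          have := hx i (by omega)
          rwa [Function.update_of_ne (by omega)] at this
        · intro hx
          refine ⟨x k, fun i hi => ?_⟩
          rcases Nat.lt_succ_iff_lt_or_eq.1 hi with hi' | rfl
          · rw [Function.update_of_ne (by omega)]; exact hx i hi'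
          · rw [Function.update_self]
      have hmono : Monotone fun m => g '' T (Function.update a k m) (k + 1) := by
        intro m m' hmm'
        apply Set.image_mono
        intro x hx i hi
        refine le_trans (hx i hi) ?_
        by_cases hik : i = k
        · subst hik; simp [hmm']
        · simp [Function.update_of_ne hik]
      have : ν (g '' T a k) = ⨆ m, ν (g '' T (Function.update a k m) (k + 1)) := by
        rw [← hmono.measure_iUnion, ← Set.image_iUnion, hU]
      have h' : c < ⨆ m, ν (g '' T (Function.update a k m) (k + 1)) := this ▸ h
      exact lt_iSup_iff.1 h'
  set M : Set Y := ⋂ k, closure (g '' T n k) with hM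
  have hTanti : Antitone (T n) := by
    intro k l hkl x hx i hi
    exact hx i (lt_of_lt_of_le hi hkl)
  refine ⟨M, MeasurableSet.iInter fun k => isClosed_closure.measurableSet, ?_, ?_⟩
  · -- M ⊆ range g
    intro y hy
    have hyc : ∀ k, y ∈ closure (g '' T n k) := fun k => Set.mem_iInter.1 hy k
    set F : Filter (ℕ → ℕ) := (⨅ k, Filter.principal (T n k)) ⊓ Filter.comap g (𝓝 y) with hF
    have hbasis : (⨅ k, Filter.principal (T n k)).HasBasis (fun _ : ℕ => True) (T n) :=
      Filter.hasBasis_iInf_principal hTanti.directed_ge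
    have hFbasis : F.HasBasis (fun p : ℕ × Set Y => p.2 ∈ 𝓝 y)
        (fun p => T n p.1 ∩ g ⁻¹' p.2) := by
      simpa using hbasis.inf ((𝓝 y).basis_sets.comap g)
    have hne : F.NeBot := by
      rw [hFbasis.neBot_iff]
      rintro ⟨k, U⟩ hU
      have := hyc k
      rcases mem_closure_iff_nhds.1 this U hU with ⟨z, hzU, x, hxT, rfl⟩
      exact ⟨x, hxT, hzU⟩
    set U : Ultrafilter (ℕ → ℕ) := Ultrafilter.of F with hUdef
    have hUF : (U : Filter (ℕ → ℕ)) ≤ F := Ultrafilter.of_le F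
    have hcoord : ∀ i, {x : ℕ → ℕ | x i ≤ n i} ∈ U := by
      intro i
      have h1 : (U : Filter (ℕ → ℕ)) ≤ Filter.principal (T n (i + 1)) :=
        le_trans hUF (le_trans inf_le_left (iInf_le _ (i + 1)))
      have h2 : T n (i + 1) ∈ U := Filter.le_principal_iff.1 h1
      exact Filter.mem_of_superset h2 fun x hx => hx i (by omega)
    have hlim : ∀ i, ∃ a ∈ Set.Iic (n i),
        (U.map (fun x : ℕ → ℕ => x i) : Filter ℕ) ≤ 𝓝 a := by
      intro i
      refine (Set.finite_Iic (n i)).isCompact.ultrafilter_le_nhds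
        (U.map (fun x : ℕ → ℕ => x i)) ?_
      rw [Ultrafilter.coe_map, Filter.le_principal_iff, Filter.mem_map]
      exact Filter.mem_of_superset (hcoord i) fun x hx => hx
    choose a ha hconv using hlim
    have hta : Filter.Tendsto (fun x : ℕ → ℕ => x) (U : Filter (ℕ → ℕ)) (𝓝 a) := by
      rw [tendsto_pi_nhds]
      intro i
      exact hconv i
    have htg : Filter.Tendsto g (U : Filter (ℕ → ℕ)) (𝓝 (g a)) :=
      (hg.tendsto a).comp hta
    have htg' : Filter.Tendsto g (U : Filter (ℕ → ℕ)) (𝓝 y) := by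
      have : (U : Filter (ℕ → ℕ)) ≤ Filter.comap g (𝓝 y) := le_trans hUF inf_le_right
      exact Filter.tendsto_iff_comap.2 this
    have : g a = y := tendsto_nhds_unique htg htg'
    exact ⟨a, this⟩
  · -- c ≤ ν M
    have hanti : Antitone fun k => closure (g '' T n k) := fun k l hkl =>
      closure_mono (Set.image_mono (hTanti hkl))
    have := hanti.measure_iInter (μ := ν)
      (fun k => isClosed_closure.measurableSet.nullMeasurableSet)
      ⟨0, measure_ne_top ν _⟩
    rw [← hM] at this
    rw [this]
    exact le_iInf fun k => le_trans (hn k).le (measure_mono subset_closure)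

/-- Every set in the product σ-algebra factors through a measurable map to `ℕ → ℝ`. -/
lemma exists_factor_prod {Ω X : Type*} [MeasurableSpace Ω] [MeasurableSpace X]
    (E : Set (Ω × X)) (hE : MeasurableSet E) :
    ∃ f : Ω → (ℕ → ℝ), Measurable f ∧ ∃ E' : Set ((ℕ → ℝ) × X),
      MeasurableSet E' ∧ E = (fun p : Ω × X => (f p.1, p.2)) ⁻¹' E' := by
  classical
  have hE2 : MeasurableSet[MeasurableSpace.generateFrom
      (Set.image2 (· ×ˢ ·) { s : Set Ω | MeasurableSet s } { t : Set X | MeasurableSet t })] E := by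
    rw [generateFrom_prod]; exact hE
  clear hE
  refine MeasurableSpace.generateFrom_induction _
    (fun t _ => ∃ f : Ω → (ℕ → ℝ), Measurable f ∧ ∃ E' : Set ((ℕ → ℝ) × X),
      MeasurableSet E' ∧ t = (fun p : Ω × X => (f p.1, p.2)) ⁻¹' E')
    ?_ ?_ ?_ ?_ E hE2
  · -- generators
    rintro t ht -
    obtain ⟨s, hs, u, hu, rfl⟩ := ht
    refine ⟨fun ω _ => if ω ∈ s then (1 : ℝ) else 0, ?_, 
      ({y : ℕ → ℝ | y 0 = 1} ×ˢ u), ?_, ?_⟩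
    · exact measurable_pi_lambda _ fun _ => Measurable.ite hs measurable_const measurable_const
    · have h1 : MeasurableSet ((fun y : ℕ → ℝ => y 0) ⁻¹' {1}) :=
        measurable_pi_apply 0 (measurableSet_singleton (1 : ℝ))
      exact h1.prod hu
    · ext p
      simp only [Set.mem_prod, Set.mem_preimage, Set.mem_setOf_eq]
      constructor
      · rintro ⟨hps, hpu⟩
        exact ⟨by simp [hps], hpu⟩
      · rintro ⟨h1, hpu⟩
        refine ⟨?_, hpu⟩
        by_contra hps
        rw [if_neg hps] at h1
        norm_num at h1
  · exact ⟨fun _ _ => 0, measurable_const, ∅, MeasurableSet.empty, by simp⟩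
  · rintro t ht iht
    obtain ⟨f, hf, E', hE', hEq⟩ := iht
    exact ⟨f, hf, E'ᶜ, hE'.compl, by rw [Set.preimage_compl, ← hEq]⟩
  · rintro s hs ihs
    choose f hf E' hE' hEq using ihs
    refine ⟨fun ω j => f (Nat.unpair j).1 ω (Nat.unpair j).2, ?_, 
      ⋃ n, (fun q : (ℕ → ℝ) × X => ((fun m => q.1 (Nat.pair n m)), q.2)) ⁻¹' (E' n), ?_, ?_⟩
    · exact measurable_pi_lambda _ fun j =>
        (measurable_pi_apply (Nat.unpair j).2).comp (hf (Nat.unpair j).1)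
    · refine MeasurableSet.iUnion fun n => MeasurableSet.preimage (hE' n) ?_
      exact ((measurable_pi_lambda _ fun m => measurable_pi_apply (Nat.pair n m)).comp
        measurable_fst).prodMk measurable_snd
    · ext p
      simp only [Set.preimage_iUnion, Set.mem_iUnion, Set.mem_preimage]
      refine exists_congr fun n => ?_
      have : (fun m => f (Nat.unpair (Nat.pair n m)).1 p.1 (Nat.unpair (Nat.pair n m)).2)
          = f n p.1 := by
        funext m; rw [Nat.unpair_pair]
      rw [this]
      rw [hEq n]; rfl

/-- Measurable projection theorem for complete σ-finite measure spaces: the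
projection onto `Ω` of a set measurable for the product σ-algebra of a
complete σ-finite measure space with a Polish space is measurable. -/
theorem measurable_projection_of_complete_sigmaFinite
    {Ω : Type*} [MeasurableSpace Ω] (μ : Measure Ω) [SigmaFinite μ]
    (hμ : μ.IsComplete)
    {X : Type*} [TopologicalSpace X] [PolishSpace X]
    [MeasurableSpace X] [BorelSpace X]
    (E : Set (Ω × X)) (hE : MeasurableSet E) :
    MeasurableSet {ω : Ω | ∃ x : X, (ω, x) ∈ E} := by
  classical
  obtain ⟨f, hf, E', hE', rfl⟩ := exists_factor_prod E hE
  set A : Set (ℕ → ℝ) := Prod.fst '' E' with hA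
  have hproj : {ω : Ω | ∃ x : X, (ω, x) ∈ (fun p : Ω × X => (f p.1, p.2)) ⁻¹' E'}
      = f ⁻¹' A := by
    ext ω
    simp only [Set.mem_setOf_eq, Set.mem_preimage, hA, Set.mem_image]
    constructor
    · rintro ⟨x, hx⟩; exact ⟨(f ω, x), hx, rfl⟩
    · rintro ⟨⟨y, x⟩, hp, h⟩
      simp only [Prod.fst] at h
      subst h
      exact ⟨x, hp⟩
  rw [hproj]
  -- `A` is analytic
  have hAan : AnalyticSet A := hE'.analyticSet_image measurable_fst
  rw [AnalyticSet] at hAan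
  rcases hAan with hAe | ⟨g, hg, hrange⟩
  · rw [hAe]; simp
  · -- equivalent finite measure
    obtain ⟨μ', hfin, hμμ', hμ'μ⟩ := exists_isFiniteMeasure_absolutelyContinuous μ
    set ν : Measure (ℕ → ℝ) := μ'.map f with hν
    haveI : IsFiniteMeasure ν := by
      constructor
      rw [hν, Measure.map_apply hf MeasurableSet.univ]
      exact measure_lt_top μ' _
    -- inner approximation of A
    have hMn : ∀ m : ℕ, ∃ M : Set (ℕ → ℝ), MeasurableSet M ∧ M ⊆ A ∧
        ν A - (m + 1 : ENNReal)⁻¹ ≤ ν M := by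
      intro m
      by_cases hle : ν A ≤ (m + 1 : ENNReal)⁻¹
      · exact ⟨∅, MeasurableSet.empty, Set.empty_subset _, by
          rw [tsub_eq_zero_of_le hle]; exact zero_le⟩
      · have hc : ν A - (m + 1 : ENNReal)⁻¹ < ν A := by
          apply ENNReal.sub_lt_self (measure_ne_top ν _)
          · intro h; rw [h] at hle; exact hle zero_le
          · simp
        rw [← hrange] at hc
        obtain ⟨M, hMmeas, hMsub, hMc⟩ := analytic_inner_approx ν hg hc
        exact ⟨M, hMmeas, hrange ▸ hMsub, by rwa [hrange] at hMc⟩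
    choose M hMmeas hMsub hMge using hMn
    set B₁ : Set (ℕ → ℝ) := ⋃ m, M m with hB₁
    have hB₁meas : MeasurableSet B₁ := MeasurableSet.iUnion hMmeas
    have hB₁sub : B₁ ⊆ A := Set.iUnion_subset hMsub
    have hB₁ge : ν A ≤ ν B₁ := by
      refine ENNReal.le_of_forall_pos_le_add fun ε hε hlt => ?_
      obtain ⟨m, hm⟩ := ENNReal.exists_inv_nat_lt (a := (ε : ENNReal)) (by simp [hε.ne'])
      have h1 : ν A - (m + 1 : ENNReal)⁻¹ ≤ ν B₁ :=
        le_trans (hMge m) (measure_mono (Set.subset_iUnion M m))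
      have h2 : ν A ≤ ν B₁ + (m + 1 : ENNReal)⁻¹ := by
        rw [← tsub_le_iff_right]; exact h1
      refine le_trans h2 (add_le_add le_rfl ?_)
      refine le_trans ?_ hm.le
      rw [ENNReal.inv_le_inv]
      exact_mod_cast Nat.le_succ m
    set B₂ : Set (ℕ → ℝ) := toMeasurable ν A with hB₂
    have hAB₂ : A ⊆ B₂ := subset_toMeasurable ν A
    have hB₂meas : MeasurableSet B₂ := measurableSet_toMeasurable ν A
    have hDnull : ν (B₂ \ B₁) = 0 := by
      rw [measure_diff (le_trans hB₁sub hAB₂) hB₁meas.nullMeasurableSet (measure_ne_top ν _)]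
      rw [measure_toMeasurable]
      exact tsub_eq_zero_of_le hB₁ge
    have hpre_null : μ (f ⁻¹' (B₂ \ B₁)) = 0 := by
      apply hμμ'
      rw [show μ' (f ⁻¹' (B₂ \ B₁)) = ν (B₂ \ B₁) from
        (Measure.map_apply hf (hB₂meas.diff hB₁meas)).symm]
      exact hDnull
    have hsplit : f ⁻¹' A = f ⁻¹' B₁ ∪ (f ⁻¹' A \ f ⁻¹' B₁) :=
      (Set.union_diff_cancel (Set.preimage_mono hB₁sub)).symm
    rw [hsplit]
    refine MeasurableSet.union (hf hB₁meas) ?_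
    apply hμ.out
    apply measure_mono_null _ hpre_null
    intro ω hω
    exact ⟨hAB₂ hω.1, hω.2⟩
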